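/- There exists a constant C > 0 such that for all pairwise distinct x, y, z ∈ B, F(x,y) F(y,z) ≤ C (1 + F(x,y) + F(y,z)) F(x,z), where F(x,y) := log(1 + √(δ_B(x)δ_B(y))/|x−y|). -/

import Mathlib

open Real Set

/-- `δ_B(x) = dist(x, ℝ∖(0,2)) = min(x, 2-x)` for `x ∈ B = (0,2)`. -/
noncomputable def deltaB (x : ℝ) : ℝ := min x (2 - x)

/-- `F(x,y) = log(1 + √(δ_B(x)δ_B(y))/|x-y|)`, comparable to the Green function of the
symmetric 1-stable (Cauchy) process killed upon exiting `B = (0,2)`. -/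
noncomputable def FB (x y : ℝ) : ℝ :=
  Real.log (1 + Real.sqrt (deltaB x * deltaB y) / |x - y|)

lemma deltaB_lip (x y : ℝ) : deltaB y ≤ deltaB x + |x - y| := by
  have h1 : y - x ≤ |x - y| := by rw [abs_sub_comm]; exact le_abs_self _
  have h2 : x - y ≤ |x - y| := le_abs_self _
  unfold deltaB
  rcases le_total x (2 - x) with h | h
  · rw [min_eq_left h]
    exact le_trans (min_le_left _ _) (by linarith)
  · rw [min_eq_right h]
    exact le_trans (min_le_right _ _) (by linarith)

lemma sqrt_key {du dv r : ℝ} (hdu : 0 ≤ du) (hdv : 0 ≤ dv) (hr : 0 ≤ r)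
    (h : dv ≤ du + r) : dv ≤ Real.sqrt du * Real.sqrt dv + r := by
  rcases le_total dv du with hle | hle
  · have h1 : Real.sqrt dv ≤ Real.sqrt du := Real.sqrt_le_sqrt hle
    nlinarith [Real.mul_self_sqrt hdv, Real.sqrt_nonneg dv]
  · have h1 : Real.sqrt du ≤ Real.sqrt dv := Real.sqrt_le_sqrt hle
    nlinarith [Real.mul_self_sqrt hdu, Real.sqrt_nonneg du]

lemma poly (u v w r s t : ℝ) (hu : 0 < u) (hv : 0 < v) (hw : 0 < w)
    (hr : 0 < r) (hs : 0 < s) (ht : 0 < t)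
    (h1 : v * v ≤ u * v + r) (h2 : v * v ≤ v * w + s) (h3 : t ≤ r + s) :
    (u * v / r) * (v * w / s) ≤ (u * v / r + v * w / s + 2) * (u * w / t) := by
  have key : (u * v) * (v * w) * t ≤ (u * v * s + v * w * r + 2 * (r * s)) * (u * w) := by
    nlinarith [mul_le_mul_of_nonneg_left h1 (by positivity : (0:ℝ) ≤ u * w * s),
      mul_le_mul_of_nonneg_left h2 (by positivity : (0:ℝ) ≤ u * w * r),
      mul_le_mul_of_nonneg_left h3 (by positivity : (0:ℝ) ≤ u * (v * v) * w)]
  have e : (u * v / r + v * w / s + 2) * (u * w / t)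
      = (u * v * s + v * w * r + 2 * (r * s)) * (u * w) / (r * s * t) := by
    field_simp
  rw [div_mul_div_comm, e, div_le_div_iff₀ (by positivity) (by positivity)]
  nlinarith [mul_le_mul_of_nonneg_right key (le_of_lt (mul_pos hr hs))]

lemma log_quarter {u : ℝ} (hu : 0 ≤ u) : Real.log (1 + u) ≤ 4 * Real.log (1 + u / 4) := by
  have h : (1 + u) ≤ (1 + u / 4) ^ (4 : ℕ) := by nlinarith [sq_nonneg u, sq_nonneg (u * u)]
  calc Real.log (1 + u) ≤ Real.log ((1 + u / 4) ^ (4 : ℕ)) :=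
        Real.log_le_log (by linarith) h
    _ = 4 * Real.log (1 + u / 4) := by rw [Real.log_pow]; norm_num

lemma core_aux (A B C0 : ℝ) (hA : 0 < A) (hB : 0 < B) (hC : 0 < C0)
    (hAB : A ≤ B) (hstar : A * B ≤ (A + B + 2) * C0) :
    Real.log (1 + A) * Real.log (1 + B)
      ≤ 8 * (1 + Real.log (1 + A) + Real.log (1 + B)) * Real.log (1 + C0) := by
  set a := Real.log (1 + A) with ha_def
  set b := Real.log (1 + B) with hb_def
  set c := Real.log (1 + C0) with hc_def
  have ha : 0 < a := Real.log_pos (by linarith)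
  have hb : 0 < b := Real.log_pos (by linarith)
  have hc : 0 < c := Real.log_pos (by linarith)
  have haA : a ≤ A := by
    have := Real.log_le_sub_one_of_pos (show (0:ℝ) < 1 + A by linarith)
    linarith
  have hbB : b ≤ B := by
    have := Real.log_le_sub_one_of_pos (show (0:ℝ) < 1 + B by linarith)
    linarith
  rcases le_total B 1 with hB1 | hB1
  · -- both A, B ≤ 1
    have hA1 : A ≤ 1 := le_trans hAB hB1
    have habAB : a * b ≤ A * B := mul_le_mul haA hbB hb.le hA.le
    rcases le_total C0 1 with hC1 | hC1
    · -- C0 ≤ 1 : c ≥ C0/2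
      have hlow : C0 ≤ c * (1 + C0) := by
        have h := Real.log_le_sub_one_of_pos (show (0:ℝ) < 1 / (1 + C0) by positivity)
        have h2 : Real.log (1 / (1 + C0)) = - c := by
          rw [one_div, Real.log_inv]
        rw [h2] at h
        have h3 : 1 / (1 + C0) - 1 = - (C0 / (1 + C0)) := by field_simp; ring
        rw [h3] at h
        have h4 : C0 / (1 + C0) ≤ c := by linarith
        calc C0 = (C0 / (1 + C0)) * (1 + C0) := by field_simp
          _ ≤ c * (1 + C0) := by
              apply mul_le_mul_of_nonneg_right h4; linarith
      have hC2c : C0 ≤ 2 * c := by nlinarith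
      have hABC : A * B ≤ 4 * C0 := by nlinarith
      nlinarith [mul_pos ha hc, mul_pos hb hc]
    · -- C0 ≥ 1 : c ≥ log 2 > 1/2
      have hlog2 : (0.6931471803 : ℝ) < Real.log 2 := Real.log_two_gt_d9
      have hc2 : Real.log 2 ≤ c := Real.log_le_log (by norm_num) (by linarith)
      have hab1 : a * b ≤ 1 := by nlinarith
      nlinarith [mul_pos ha hc, mul_pos hb hc]
  · -- B ≥ 1
    have hA4 : A ≤ 4 * C0 := by
      have h1 : A * B ≤ 4 * B * C0 := by nlinarith
      have := le_of_mul_le_mul_right (by nlinarith : A * B ≤ (4 * C0) * B) hB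
      linarith
    have ha4 : a ≤ 4 * c := by
      calc a ≤ 4 * Real.log (1 + A / 4) := log_quarter hA.le
        _ ≤ 4 * c := by
            have : Real.log (1 + A / 4) ≤ c :=
              Real.log_le_log (by linarith) (by linarith)
            linarith
    have hab : a * b ≤ 4 * c * b := mul_le_mul_of_nonneg_right ha4 hb.le
    nlinarith [mul_pos hc hb, mul_pos hc ha]

lemma core (A B C0 : ℝ) (hA : 0 < A) (hB : 0 < B) (hC : 0 < C0)
    (hstar : A * B ≤ (A + B + 2) * C0) :
    Real.log (1 + A) * Real.log (1 + B)
      ≤ 8 * (1 + Real.log (1 + A) + Real.log (1 + B)) * Real.log (1 + C0) := by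
  rcases le_total A B with h | h
  · exact core_aux A B C0 hA hB hC h hstar
  · have := core_aux B A C0 hB hA hC h (by linarith)
    nlinarith [this]

/-- The 3G-type inequality for the Cauchy process on `B = (0,2)`. -/
theorem cauchy_3G :
    ∃ C : ℝ, 0 < C ∧ ∀ x ∈ Set.Ioo (0:ℝ) 2, ∀ y ∈ Set.Ioo (0:ℝ) 2, ∀ z ∈ Set.Ioo (0:ℝ) 2,
      x ≠ y → y ≠ z → x ≠ z →
        FB x y * FB y z ≤ C * (1 + FB x y + FB y z) * FB x z := by
  refine ⟨8, by norm_num, ?_⟩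
  intro x hx y hy z hz hxy hyz hxz
  obtain ⟨hx1, hx2⟩ := hx
  obtain ⟨hy1, hy2⟩ := hy
  obtain ⟨hz1, hz2⟩ := hz
  have hdx : 0 < deltaB x := lt_min hx1 (by linarith)
  have hdy : 0 < deltaB y := lt_min hy1 (by linarith)
  have hdz : 0 < deltaB z := lt_min hz1 (by linarith)
  have hr : 0 < |x - y| := abs_pos.mpr (sub_ne_zero.mpr hxy)
  have hs : 0 < |y - z| := abs_pos.mpr (sub_ne_zero.mpr hyz)
  have ht : 0 < |x - z| := abs_pos.mpr (sub_ne_zero.mpr hxz)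
  set u := Real.sqrt (deltaB x) with hu_def
  set v := Real.sqrt (deltaB y) with hv_def
  set w := Real.sqrt (deltaB z) with hw_def
  have hu : 0 < u := Real.sqrt_pos.mpr hdx
  have hv : 0 < v := Real.sqrt_pos.mpr hdy
  have hw : 0 < w := Real.sqrt_pos.mpr hdz
  have hvv : v * v = deltaB y := Real.mul_self_sqrt hdy.le
  have h1 : v * v ≤ u * v + |x - y| := by
    rw [hvv]
    exact sqrt_key hdx.le hdy.le hr.le (deltaB_lip x y)
  have h2 : v * v ≤ v * w + |y - z| := by
    rw [hvv]
    have := sqrt_key hdz.le hdy.le hs.le (by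
      have := deltaB_lip z y
      rwa [abs_sub_comm] at this)
    linarith [this, mul_comm w v]
  have h3 : |x - z| ≤ |x - y| + |y - z| := abs_sub_le x y z
  have hstar := poly u v w (|x - y|) (|y - z|) (|x - z|) hu hv hw hr hs ht h1 h2 h3
  have eA : FB x y = Real.log (1 + u * v / |x - y|) := by
    rw [FB, Real.sqrt_mul hdx.le]
  have eB : FB y z = Real.log (1 + v * w / |y - z|) := by
    rw [FB, Real.sqrt_mul hdy.le]
  have eC : FB x z = Real.log (1 + u * w / |x - z|) := by
    rw [FB, Real.sqrt_mul hdx.le]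
  rw [eA, eB, eC]
  exact core _ _ _ (by positivity) (by positivity) (by positivity) hstar
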